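/- Let S = {1,…,m} be a finite set, q a pmf on S with q(i) > 0 for all i, d > 0, and c : S → ℝ. For λ ∈ (ℝ≥0)^m and ν ∈ ℝ, define d̃(i, λ_i, ν) ∈ ℝ ∪ {+∞} by: d̃ = ν if λ_i = 0 and c(i) ≤ ν; d̃ = (1+d)·λ_i·exp((c(i) − λ_i − ν)/λ_i) + ν if λ_i > 0; and d̃ = +∞ if λ_i = 0 and c(i) > ν. Then for every λ ∈ (ℝ≥0)^m and ν ∈ ℝ, the supremum over r ∈ (ℝ≥0)^m of Σ_{i∈S} q(i)·[ r_i·c(i) + λ_i·r_i·ln((1+d)/r_i) + ν·(1 − r_i) ] (with the convention that the middle term is 0 when r_i = 0), taken in ℝ ∪ {+∞}, equals Σ_{i∈S} q(i)·d̃(i, λ_i, ν). -/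
import Mathlib


/-- The extended-real-valued dual integrand `d̃` of the paper: for cost value `b`,
multiplier `l ≥ 0` and `ν : ℝ`,
`d̃ = ν` if `l = 0` and `b ≤ ν`; `d̃ = (1+d)*l*exp((b-l-ν)/l) + ν` if `l ≠ 0`;
`d̃ = +∞` if `l = 0` and `b > ν`. -/
noncomputable def dualIntegrand (d b l ν : ℝ) : EReal :=
  if l = 0 then (if b ≤ ν then ((ν : ℝ) : EReal) else ⊤)
  else (((1 + d) * l * Real.exp ((b - l - ν) / l) + ν : ℝ) : EReal)

private lemma ereal_coe_sum {m : ℕ} (f : Fin m → ℝ) :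
    ((∑ i, f i : ℝ) : EReal) = ∑ i, ((f i : EReal)) :=
  map_sum (⟨⟨(fun x : ℝ => (x : EReal)), EReal.coe_zero⟩, fun x y => EReal.coe_add x y⟩ : ℝ →+ EReal) _ _

private lemma key_ineq (d b l ν r : ℝ) (hd : 0 < d) (hl : 0 < l) (hr : 0 ≤ r) :
    r * b + l * (r * Real.log ((1 + d) / r)) + ν * (1 - r)
      ≤ (1 + d) * l * Real.exp ((b - l - ν) / l) + ν := by
  have hd1 : (0:ℝ) < 1 + d := by linarith
  set E := Real.exp ((b - l - ν) / l) with hE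
  have hEpos : 0 < E := Real.exp_pos _
  rcases hr.eq_or_lt with h | h
  · subst h
    simp only [zero_mul, mul_zero, add_zero, zero_add, sub_zero, mul_one]
    nlinarith [mul_pos (mul_pos hd1 hl) hEpos]
  · have hs : l * ((b - l - ν) / l) = b - l - ν := by field_simp
    have hx : (0:ℝ) < (1 + d) * E / r := by positivity
    have hlog : Real.log ((1 + d) * E / r) ≤ (1 + d) * E / r - 1 :=
      Real.log_le_sub_one_of_pos hx
    have h2 : r * Real.log ((1 + d) * E / r) ≤ (1 + d) * E - r := by
      have := mul_le_mul_of_nonneg_left hlog h.le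
      calc r * Real.log ((1 + d) * E / r) ≤ r * ((1 + d) * E / r - 1) := this
        _ = (1 + d) * E - r := by field_simp
    have hlogsplit : Real.log ((1 + d) * E / r)
        = Real.log (1 + d) + (b - l - ν) / l - Real.log r := by
      rw [Real.log_div (by positivity) h.ne', Real.log_mul hd1.ne' hEpos.ne', hE, Real.log_exp]
    have hlogdr : Real.log ((1 + d) / r) = Real.log (1 + d) - Real.log r :=
      Real.log_div hd1.ne' h.ne'
    have h3 : r * (Real.log (1 + d) + (b - l - ν) / l - Real.log r) ≤ (1 + d) * E - r := by
      rw [← hlogsplit]; exact h2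
    have h4 := mul_le_mul_of_nonneg_left h3 hl.le
    have hs' : l * (r * ((b - l - ν) / l)) = r * (b - l - ν) := by
      field_simp
    rw [hlogdr]
    nlinarith [h4, hs']

private lemma key_eq (d b l ν : ℝ) (hd : 0 < d) (hl : 0 < l) :
    ((1 + d) * Real.exp ((b - l - ν) / l)) * b
      + l * (((1 + d) * Real.exp ((b - l - ν) / l))
          * Real.log ((1 + d) / ((1 + d) * Real.exp ((b - l - ν) / l))))
      + ν * (1 - (1 + d) * Real.exp ((b - l - ν) / l))
      = (1 + d) * l * Real.exp ((b - l - ν) / l) + ν := by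
  have hd1 : (0:ℝ) < 1 + d := by linarith
  set E := Real.exp ((b - l - ν) / l) with hE
  have hEpos : 0 < E := Real.exp_pos _
  have hlog : Real.log ((1 + d) / ((1 + d) * E)) = -((b - l - ν) / l) := by
    rw [show (1 + d) / ((1 + d) * E) = E⁻¹ by field_simp, Real.log_inv, hE, Real.log_exp]
  rw [hlog]
  have hs : l * ((b - l - ν) / l) = b - l - ν := by field_simp
  linear_combination (-(1 + d) * E) * hs

private lemma ereal_sum_ne_bot {α : Type*} (s : Finset α) (f : α → EReal)
    (h : ∀ i ∈ s, f i ≠ ⊥) : ∑ i ∈ s, f i ≠ ⊥ := by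
  classical
  induction s using Finset.cons_induction with
  | empty => simp
  | cons a s ha ih =>
    rw [Finset.sum_cons, Ne, EReal.add_eq_bot_iff]
    push_neg
    exact ⟨h a (Finset.mem_cons_self _ _), ih fun i hi => h i (Finset.mem_cons_of_mem hi)⟩

private lemma ereal_sum_eq_top {m : ℕ} (f : Fin m → EReal) (hnb : ∀ i, f i ≠ ⊥)
    (i₀ : Fin m) (ht : f i₀ = ⊤) : ∑ i, f i = ⊤ := by
  classical
  rw [← Finset.add_sum_erase _ f (Finset.mem_univ i₀), ht,
    EReal.top_add_of_ne_bot (ereal_sum_ne_bot _ _ fun i _ => hnb i)]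

/-- For every `λ ∈ (ℝ≥0)^m` and `ν ∈ ℝ`, the supremum (in the extended
reals) over `r ∈ (ℝ≥0)^m` of
`∑ i, q i * (r i * c i + λ i * (r i * ln ((1+d)/r i)) + ν * (1 - r i))`
(with the convention that the middle term is `0` at `r i = 0`, which holds
automatically since `Real.log 0 = 0`) equals `∑ i, q i * d̃(i, λ i, ν)`. -/
theorem sup_lagrangean_eq_dual_sum
    (m : ℕ) (q : Fin m → ℝ) (hq0 : ∀ i, 0 < q i) (hq1 : ∑ i, q i = 1)
    (d : ℝ) (hd : 0 < d) (c : Fin m → ℝ)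
    (l : Fin m → ℝ) (hl : ∀ i, 0 ≤ l i) (ν : ℝ) :
    (⨆ r : {r : Fin m → ℝ // ∀ i, 0 ≤ r i},
        ((∑ i, q i * (r.1 i * c i + l i * (r.1 i * Real.log ((1 + d) / r.1 i))
            + ν * (1 - r.1 i)) : ℝ) : EReal))
      = ∑ i, ((q i : EReal) * dualIntegrand d (c i) (l i) ν) := by
  apply le_antisymm
  · -- upper bound
    apply iSup_le
    intro r
    rw [ereal_coe_sum]
    apply Finset.sum_le_sum
    intro i _
    by_cases hli : l i = 0
    · by_cases hci : c i ≤ ν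
      · simp only [dualIntegrand, hli, if_pos, if_true, hci, ← EReal.coe_mul]
        rw [EReal.coe_le_coe_iff]
        have hr := r.2 i
        have hmm : r.1 i * (c i - ν) ≤ 0 :=
          mul_nonpos_of_nonneg_of_nonpos hr (sub_nonpos.2 hci)
        have : r.1 i * c i + 0 * (r.1 i * Real.log ((1 + d) / r.1 i)) + ν * (1 - r.1 i) ≤ ν := by
          nlinarith
        exact mul_le_mul_of_nonneg_left this (hq0 i).le
      · simp only [dualIntegrand, hli, if_true, if_neg hci]
        rw [EReal.mul_top_of_pos (by exact_mod_cast hq0 i)]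
        exact le_top
    · simp only [dualIntegrand, if_neg hli, ← EReal.coe_mul]
      rw [EReal.coe_le_coe_iff]
      exact mul_le_mul_of_nonneg_left
        (key_ineq d (c i) (l i) ν (r.1 i) hd (lt_of_le_of_ne (hl i) (Ne.symm hli)) (r.2 i))
        (hq0 i).le
  · -- lower bound
    by_cases hC : ∀ i, l i = 0 → c i ≤ ν
    · set rs : Fin m → ℝ :=
        fun i => if l i = 0 then 0 else (1 + d) * Real.exp ((c i - l i - ν) / l i) with hrs
      have hrsnn : ∀ i, 0 ≤ rs i := by
        intro i
        simp only [hrs]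
        split
        · exact le_rfl
        · positivity
      have hRHS : (∑ i, ((q i : EReal) * dualIntegrand d (c i) (l i) ν))
          = ((∑ i, q i * (rs i * c i + l i * (rs i * Real.log ((1 + d) / rs i))
              + ν * (1 - rs i)) : ℝ) : EReal) := by
        rw [ereal_coe_sum]
        refine Finset.sum_congr rfl fun i _ => ?_
        by_cases hli : l i = 0
        · simp only [dualIntegrand, hli, if_true, if_pos (hC i hli), hrs, if_pos hli,
            ← EReal.coe_mul, EReal.coe_eq_coe_iff]
          ring
        · simp only [dualIntegrand, if_neg hli, hrs, ← EReal.coe_mul, EReal.coe_eq_coe_iff,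
            if_neg hli]
          exact congrArg (q i * ·)
            (key_eq d (c i) (l i) ν hd (lt_of_le_of_ne (hl i) (Ne.symm hli))).symm
      rw [hRHS]
      exact le_iSup (fun r : {r : Fin m → ℝ // ∀ i, 0 ≤ r i} =>
        ((∑ i, q i * (r.1 i * c i + l i * (r.1 i * Real.log ((1 + d) / r.1 i))
            + ν * (1 - r.1 i)) : ℝ) : EReal)) ⟨rs, hrsnn⟩
    · push_neg at hC
      obtain ⟨i₀, h0, hν⟩ := hC
      have hnb : ∀ i, ((q i : EReal) * dualIntegrand d (c i) (l i) ν) ≠ ⊥ := by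
        intro i
        unfold dualIntegrand
        split_ifs with h1 h2
        · rw [← EReal.coe_mul]; exact EReal.coe_ne_bot _
        · rw [EReal.mul_top_of_pos (show (0:EReal) < (q i : EReal) from by exact_mod_cast hq0 i)]
          simp
        · rw [← EReal.coe_mul]; exact EReal.coe_ne_bot _
      have ht : ((q i₀ : EReal) * dualIntegrand d (c i₀) (l i₀) ν) = ⊤ := by
        unfold dualIntegrand
        rw [if_pos h0, if_neg (not_le.2 hν),
          EReal.mul_top_of_pos (show (0:EReal) < (q i₀ : EReal) from by exact_mod_cast hq0 i₀)]
      have htop : (∑ i, ((q i : EReal) * dualIntegrand d (c i) (l i) ν)) = ⊤ :=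
        ereal_sum_eq_top _ hnb i₀ ht
      rw [htop, top_le_iff, EReal.eq_top_iff_forall_lt]
      intro y
      set B := q i₀ * (c i₀ - ν) with hB
      have hBpos : 0 < B := mul_pos (hq0 i₀) (by linarith)
      set N := max 0 ((y + 1 - ν) / B) with hN
      have hNnn : 0 ≤ N := le_max_left _ _
      set rN : Fin m → ℝ := fun i => if i = i₀ then N else 0 with hrN
      have hrNnn : ∀ i, 0 ≤ rN i := by
        intro i; simp only [hrN]; split
        · exact hNnn
        · exact le_rfl
      have hsplit : (∑ i, q i * (rN i * c i + l i * (rN i * Real.log ((1 + d) / rN i))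
            + ν * (1 - rN i))) = B * N + ν := by
        have hterm : ∀ i, q i * (rN i * c i + l i * (rN i * Real.log ((1 + d) / rN i))
            + ν * (1 - rN i)) = (if i = i₀ then B * N else 0) + q i * ν := by
          intro i
          by_cases hi : i = i₀
          · subst hi
            simp [hrN, h0, hB]
            ring
          · simp only [hrN, if_neg hi]
            ring
        rw [Finset.sum_congr rfl (fun i _ => hterm i), Finset.sum_add_distrib,
          Finset.sum_ite_eq' Finset.univ i₀, ← Finset.sum_mul, hq1]
        simp
      refine lt_of_lt_of_le ?_ (le_iSup (fun r : {r : Fin m → ℝ // ∀ i, 0 ≤ r i} =>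
        ((∑ i, q i * (r.1 i * c i + l i * (r.1 i * Real.log ((1 + d) / r.1 i))
            + ν * (1 - r.1 i)) : ℝ) : EReal)) ⟨rN, hrNnn⟩)
      rw [EReal.coe_lt_coe_iff]
      simp only [hsplit]
      have h1 : (y + 1 - ν) / B ≤ N := le_max_right _ _
      have h2 : (y + 1 - ν) / B * B = y + 1 - ν := by field_simp
      nlinarith [mul_le_mul_of_nonneg_right h1 hBpos.le]
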